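/- Let λ > 0 and for ℓ ∈ ℕ, ℓ ≥ 1, define Φ(ℓ) := √(w_λ(ℓ)) · ∫_0^∞ e^{−2u} u^{−λ−1} I_{λ+ℓ}(2u) du, where w_λ(ℓ) ≍ (ℓ+1)^{2λ} is the ultraspherical normalization weight. Then there exists C > 0, independent of ℓ, such that Φ(ℓ) ≤ C/(ℓ+1)^{λ+1}. -/

import Mathlib

open Real MeasureTheory

/-- Normalization weight `w_λ(n)`. -/
noncomputable def wUltra (l : ℝ) (n : ℕ) : ℝ :=
  Real.Gamma l * (ascPochhammer ℝ n).eval (2 * l) * ((n : ℝ) + l) /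
    (Real.sqrt π * Real.Gamma (l + 1 / 2) * (n.factorial : ℝ))

/-- The modified Bessel function of the first kind of order `ν`. -/
noncomputable def besselI (ν : ℝ) (z : ℝ) : ℝ :=
  ∑' k : ℕ, (z / 2) ^ (ν + 2 * (k : ℝ)) / ((k.factorial : ℝ) * Real.Gamma (ν + k + 1))

namespace PKB
open Set Finset


lemma Gamma_add_theta_le {x θ : ℝ} (hx : 1 ≤ x) (hθ0 : 0 ≤ θ) (hθ1 : θ ≤ 1) :
    Real.Gamma (x + θ) ≤ Real.Gamma x * x ^ θ := by
  have hx0 : (0:ℝ) < x := lt_of_lt_of_le one_pos hx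
  have h1 : Real.Gamma (x + θ) = Real.exp (Real.log (Real.Gamma (x + θ))) :=
    (Real.exp_log (Real.Gamma_pos_of_pos (by linarith))).symm
  have hconv := Real.convexOn_log_Gamma.2 (mem_Ioi.2 hx0) (mem_Ioi.2 (by linarith : (0:ℝ) < x + 1))
    (by linarith : (0:ℝ) ≤ 1 - θ) hθ0 (by ring)
  simp only [smul_eq_mul, Function.comp_apply] at hconv
  have harg : (1 - θ) * x + θ * (x + 1) = x + θ := by ring
  rw [harg] at hconv
  rw [h1]
  calc Real.exp (Real.log (Real.Gamma (x + θ)))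
      ≤ Real.exp ((1 - θ) * Real.log (Real.Gamma x) + θ * Real.log (Real.Gamma (x + 1))) :=
        Real.exp_le_exp.2 hconv
    _ = Real.Gamma x ^ (1 - θ) * Real.Gamma (x + 1) ^ θ := by
        rw [Real.exp_add, Real.rpow_def_of_pos (Real.Gamma_pos_of_pos hx0),
          Real.rpow_def_of_pos (Real.Gamma_pos_of_pos (by linarith : (0:ℝ) < x + 1))]
        ring_nf
    _ = Real.Gamma x * x ^ θ := by
        rw [Real.Gamma_add_one hx0.ne']
        rw [Real.mul_rpow hx0.le (Real.Gamma_pos_of_pos hx0).le]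
        rw [show Real.Gamma x ^ (1 - θ) * (x ^ θ * Real.Gamma x ^ θ)
          = (Real.Gamma x ^ (1 - θ) * Real.Gamma x ^ θ) * x ^ θ by ring]
        rw [← Real.rpow_add (Real.Gamma_pos_of_pos hx0)]
        norm_num

lemma Gamma_add_theta_ge {x θ : ℝ} (hx : 1 ≤ x) (hθ0 : 0 ≤ θ) (hθ1 : θ ≤ 1) :
    Real.Gamma x * x ^ θ ≤ 2 * Real.Gamma (x + θ) := by
  have hx0 : (0:ℝ) < x := lt_of_lt_of_le one_pos hx
  have hxθ : (0:ℝ) < x + θ := by linarith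
  -- log Γ(x+1) ≤ θ log Γ(x+θ) + (1-θ) log Γ(x+θ+1)
  have hconv := Real.convexOn_log_Gamma.2 (mem_Ioi.2 hxθ)
    (mem_Ioi.2 (by linarith : (0:ℝ) < x + θ + 1)) hθ0 (by linarith : (0:ℝ) ≤ 1 - θ) (by ring)
  simp only [smul_eq_mul, Function.comp_apply] at hconv
  have harg : θ * (x + θ) + (1 - θ) * (x + θ + 1) = x + 1 := by ring
  rw [harg] at hconv
  -- so Γ(x+1) ≤ Γ(x+θ) * (x+θ)^(1-θ)
  have key : Real.Gamma (x + 1) ≤ Real.Gamma (x + θ) * (x + θ) ^ (1 - θ) := by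
    have h1 : Real.Gamma (x + 1) = Real.exp (Real.log (Real.Gamma (x + 1))) :=
      (Real.exp_log (Real.Gamma_pos_of_pos (by linarith))).symm
    rw [h1]
    calc Real.exp (Real.log (Real.Gamma (x + 1)))
        ≤ Real.exp (θ * Real.log (Real.Gamma (x + θ)) + (1 - θ) * Real.log (Real.Gamma (x + θ + 1))) :=
          Real.exp_le_exp.2 hconv
      _ = Real.Gamma (x + θ) ^ θ * Real.Gamma (x + θ + 1) ^ (1 - θ) := by
          rw [Real.exp_add, Real.rpow_def_of_pos (Real.Gamma_pos_of_pos hxθ),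
            Real.rpow_def_of_pos (Real.Gamma_pos_of_pos (by linarith : (0:ℝ) < x + θ + 1))]
          ring_nf
      _ = Real.Gamma (x + θ) * (x + θ) ^ (1 - θ) := by
          rw [Real.Gamma_add_one hxθ.ne', Real.mul_rpow hxθ.le (Real.Gamma_pos_of_pos hxθ).le]
          rw [show Real.Gamma (x+θ) ^ θ * ((x+θ) ^ (1-θ) * Real.Gamma (x+θ) ^ (1-θ))
            = (Real.Gamma (x+θ) ^ θ * Real.Gamma (x+θ) ^ (1-θ)) * (x+θ) ^ (1-θ) by ring]
          rw [← Real.rpow_add (Real.Gamma_pos_of_pos hxθ)]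
          norm_num
  -- Γ(x+1) = x Γ(x)
  rw [Real.Gamma_add_one hx0.ne'] at key
  -- now: x Γ(x) ≤ Γ(x+θ) (x+θ)^(1-θ) ≤ Γ(x+θ) (x+1)^(1-θ)
  have key2 : x * Real.Gamma x ≤ Real.Gamma (x + θ) * (x + 1) ^ (1 - θ) :=
    key.trans (by
      apply mul_le_mul_of_nonneg_left _ (Real.Gamma_pos_of_pos hxθ).le
      exact Real.rpow_le_rpow hxθ.le (by linarith) (by linarith))
  -- and x^θ (x+1)^(1-θ) ≤ (x+1)^θ (x+1)^(1-θ) = x+1 ≤ 2x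
  have key3 : x ^ θ * (x + 1) ^ (1 - θ) ≤ 2 * x := by
    calc x ^ θ * (x + 1) ^ (1 - θ) ≤ (x + 1) ^ θ * (x + 1) ^ (1 - θ) := by
          apply mul_le_mul_of_nonneg_right _ (Real.rpow_nonneg (by linarith) _)
          exact Real.rpow_le_rpow hx0.le (by linarith) hθ0
      _ = (x + 1) ^ (θ + (1 - θ)) := (Real.rpow_add (by linarith) _ _).symm
      _ = x + 1 := by norm_num
      _ ≤ 2 * x := by linarith
  -- combine:  Γ(x) x^θ ≤ 2 Γ(x+θ)
  -- from key2 : Γ(x) ≤ Γ(x+θ) (x+1)^(1-θ) / x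
  have hG := Real.Gamma_pos_of_pos hx0
  have hGθ := Real.Gamma_pos_of_pos hxθ
  nlinarith [mul_le_mul_of_nonneg_left key3 hGθ.le,
    mul_le_mul_of_nonneg_right key2 (Real.rpow_nonneg hx0.le θ),
    Real.rpow_nonneg hx0.le θ, mul_pos hGθ (Real.rpow_pos_of_pos hx0 θ)]



/-- Lower bound: `Γ(x) x^a ≤ 2 Γ(x+a)` for `x ≥ 1`, `a ≥ 0`. -/
lemma Gamma_ratio_ge (a : ℝ) (ha : 0 ≤ a) : ∀ x : ℝ, 1 ≤ x →
    Real.Gamma x * x ^ a ≤ 2 * Real.Gamma (x + a) := by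
  obtain ⟨q, θ, hθ0, hθ1, rfl⟩ : ∃ (q : ℕ) (θ : ℝ), 0 ≤ θ ∧ θ ≤ 1 ∧ a = θ + q := by
    refine ⟨⌊a⌋₊, a - ⌊a⌋₊, ?_, ?_, by ring⟩
    · have := Nat.floor_le ha; linarith
    · have := Nat.lt_floor_add_one a; linarith
  clear ha
  induction q with
  | zero => intro x hx; simpa using Gamma_add_theta_ge hx hθ0 hθ1
  | succ q ih =>
    intro x hx
    have hx0 : (0:ℝ) < x := lt_of_lt_of_le one_pos hx
    have hq0 : (0:ℝ) ≤ (q:ℝ) := Nat.cast_nonneg q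
    have hprev := ih x hx
    have hpos : (0:ℝ) < x + (θ + q) := by linarith
    have hG := Real.Gamma_pos_of_pos hpos
    have hstep : Real.Gamma (x + (θ + ((q+1:ℕ)):ℝ)) = (x + (θ + q)) * Real.Gamma (x + (θ + q)) := by
      rw [show x + (θ + ((q+1:ℕ)):ℝ) = (x + (θ + q)) + 1 by push_cast; ring,
        Real.Gamma_add_one hpos.ne']
    have hpow : x ^ (θ + ((q+1:ℕ)):ℝ) = x ^ ((θ + q):ℝ) * x := by
      rw [show (θ + ((q+1:ℕ)):ℝ) = (θ + q) + 1 by push_cast; ring,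
        Real.rpow_add hx0, Real.rpow_one]
    rw [hstep, hpow]
    nlinarith [mul_le_mul_of_nonneg_right hprev hx0.le, Real.rpow_nonneg hx0.le ((θ+q):ℝ),
      (Real.Gamma_pos_of_pos hpos)]

/-- Lower bound for `x ≥ 1/2`: `Γ(x) x^a ≤ C Γ(x+a)`. -/
lemma Gamma_ratio_ge_half (a : ℝ) (ha : 0 ≤ a) : ∀ x : ℝ, 1/2 ≤ x →
    Real.Gamma x * x ^ a ≤ (2 * (1 + 2*a)) * Real.Gamma (x + a) := by
  intro x hx
  have hx0 : (0:ℝ) < x := by linarith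
  have hxa : (0:ℝ) < x + a := by linarith
  have h1 := Gamma_ratio_ge a ha (x+1) (by linarith)
  rw [Real.Gamma_add_one hx0.ne'] at h1
  rw [show x + 1 + a = (x + a) + 1 by ring, Real.Gamma_add_one hxa.ne'] at h1
  have hGx := Real.Gamma_pos_of_pos hx0
  have hGxa := Real.Gamma_pos_of_pos hxa
  have h2 : x ^ a ≤ (x+1) ^ a := Real.rpow_le_rpow hx0.le (by linarith) ha
  have h3 : x + a ≤ (1 + 2*a) * x := by nlinarith
  have key : (Real.Gamma x * x ^ a) * x ≤ ((2 * (1 + 2*a)) * Real.Gamma (x + a)) * x := by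
    nlinarith [mul_le_mul_of_nonneg_left h2 (mul_pos hGx hx0).le,
      mul_le_mul_of_nonneg_left h3 (mul_pos (by norm_num : (0:ℝ) < 2) hGxa).le]
  exact le_of_mul_le_mul_right key hx0

/-- Upper bound: `Γ(x+a) ≤ C Γ(x) x^a` for `x ≥ 1`. -/
lemma Gamma_ratio_le (a : ℝ) (ha : 0 ≤ a) : ∃ C : ℝ, 0 < C ∧ ∀ x : ℝ, 1 ≤ x →
    Real.Gamma (x + a) ≤ C * Real.Gamma x * x ^ a := by
  obtain ⟨q, θ, hθ0, hθ1, rfl⟩ : ∃ (q : ℕ) (θ : ℝ), 0 ≤ θ ∧ θ ≤ 1 ∧ a = θ + q := by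
    refine ⟨⌊a⌋₊, a - ⌊a⌋₊, ?_, ?_, by ring⟩
    · have := Nat.floor_le ha; linarith
    · have := Nat.lt_floor_add_one a; linarith
  clear ha
  induction q with
  | zero =>
    refine ⟨1, one_pos, fun x hx => ?_⟩
    simpa using Gamma_add_theta_le hx hθ0 hθ1
  | succ q ih =>
    obtain ⟨C, hC, hCb⟩ := ih
    refine ⟨C * (q + 2), by positivity, fun x hx => ?_⟩
    have hx0 : (0:ℝ) < x := lt_of_lt_of_le one_pos hx
    have hq0 : (0:ℝ) ≤ (q:ℝ) := Nat.cast_nonneg q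
    have hpos : (0:ℝ) < x + (θ + q) := by linarith
    have hstep : Real.Gamma (x + (θ + ((q+1:ℕ)):ℝ)) = (x + (θ + q)) * Real.Gamma (x + (θ + q)) := by
      rw [show x + (θ + ((q+1:ℕ)):ℝ) = (x + (θ + q)) + 1 by push_cast; ring,
        Real.Gamma_add_one hpos.ne']
    have hpow : x ^ (θ + ((q+1:ℕ)):ℝ) = x ^ ((θ + q):ℝ) * x := by
      rw [show (θ + ((q+1:ℕ)):ℝ) = (θ + q) + 1 by push_cast; ring,
        Real.rpow_add hx0, Real.rpow_one]
    rw [hstep, hpow]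
    have hb : x + (θ + q) ≤ (q + 2) * x := by nlinarith
    have h1 := hCb x hx
    have hG := Real.Gamma_pos_of_pos hpos
    nlinarith [mul_le_mul hb h1 hG.le (by positivity : (0:ℝ) ≤ ((q:ℝ)+2) * x),
      Real.rpow_nonneg hx0.le ((θ+q):ℝ), Real.Gamma_pos_of_pos (lt_of_lt_of_le one_pos hx : (0:ℝ) < x)]




/-- The complex beta integrand equals the coerced real one on `[0,1]`. -/
lemma beta_integrand_eq (p q : ℝ) {x : ℝ} (hx0 : 0 ≤ x) (hx1 : x ≤ 1) :
    ((x:ℂ) ^ ((p:ℂ) - 1) * (1 - (x:ℂ)) ^ ((q:ℂ) - 1))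
      = ((x ^ (p-1) * (1-x) ^ (q-1) : ℝ) : ℂ) := by
  have h1 : ((x:ℂ)) ^ ((p:ℂ) - 1) = ((x ^ (p-1) : ℝ) : ℂ) := by
    rw [show ((p:ℂ) - 1) = ((p - 1 : ℝ) : ℂ) by push_cast; ring]
    exact (Complex.ofReal_cpow hx0 (p-1)).symm
  have h2 : ((1 - (x:ℂ))) ^ ((q:ℂ) - 1) = (((1-x) ^ (q-1) : ℝ) : ℂ) := by
    rw [show (1 - (x:ℂ)) = (((1 - x : ℝ)) : ℂ) by push_cast; ring,
      show ((q:ℂ) - 1) = ((q - 1 : ℝ) : ℂ) by push_cast; ring]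
    exact (Complex.ofReal_cpow (by linarith) (q-1)).symm
  rw [h1, h2]
  push_cast
  ring

/-- Real Beta integral convergence. -/
lemma betaIntegrable {p q : ℝ} (hp : 0 < p) (hq : 0 < q) :
    IntegrableOn (fun t : ℝ => t ^ (p-1) * (1-t) ^ (q-1)) (Ioo (0:ℝ) 1) := by
  have hc := Complex.betaIntegral_convergent (u := (p:ℂ)) (v := (q:ℂ))
    (by simpa using hp) (by simpa using hq)
  rw [intervalIntegrable_iff_integrableOn_Ioc_of_le zero_le_one] at hc
  have hre : IntegrableOn (fun x : ℝ =>
      ((x:ℂ) ^ ((p:ℂ) - 1) * (1 - (x:ℂ)) ^ ((q:ℂ) - 1)).re) (Ioc (0:ℝ) 1) := hc.re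
  have : IntegrableOn (fun t : ℝ => t ^ (p-1) * (1-t) ^ (q-1)) (Ioc (0:ℝ) 1) := by
    apply hre.congr_fun _ measurableSet_Ioc
    intro x hx
    show ((x:ℂ) ^ ((p:ℂ) - 1) * (1 - (x:ℂ)) ^ ((q:ℂ) - 1)).re = _
    rw [beta_integrand_eq p q hx.1.le hx.2, Complex.ofReal_re]
  exact this.mono_set Ioo_subset_Ioc_self

/-- Real Beta integral formula. -/
lemma betaIntegral_real {p q : ℝ} (hp : 0 < p) (hq : 0 < q) :
    ∫ t in Ioo (0:ℝ) 1, t ^ (p-1) * (1-t) ^ (q-1)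
      = Real.Gamma p * Real.Gamma q / Real.Gamma (p+q) := by
  have key := Complex.Gamma_mul_Gamma_eq_betaIntegral (s := (p:ℂ)) (t := (q:ℂ))
    (by simpa using hp) (by simpa using hq)
  have hB : Complex.betaIntegral (p:ℂ) (q:ℂ)
      = ((∫ t in Ioo (0:ℝ) 1, t ^ (p-1) * (1-t) ^ (q-1) : ℝ) : ℂ) := by
    rw [Complex.betaIntegral]
    rw [show (∫ (x : ℝ) in (0:ℝ)..1, (x:ℂ) ^ ((p:ℂ) - 1) * (1 - (x:ℂ)) ^ ((q:ℂ) - 1))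
        = ∫ (x : ℝ) in (0:ℝ)..1, ((x ^ (p-1) * (1-x) ^ (q-1) : ℝ) : ℂ) from
      intervalIntegral.integral_congr (fun x hx => by
        rw [Set.uIcc_of_le zero_le_one] at hx
        exact beta_integrand_eq p q hx.1 hx.2)]
    rw [intervalIntegral.integral_ofReal]
    congr 1
    rw [intervalIntegral.integral_of_le zero_le_one, integral_Ioc_eq_integral_Ioo]
  rw [hB, Complex.Gamma_ofReal, Complex.Gamma_ofReal, show (p:ℂ) + (q:ℂ) = ((p+q:ℝ):ℂ) by
    push_cast; ring, Complex.Gamma_ofReal] at key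
  have hGpq : Real.Gamma (p+q) ≠ 0 := (Real.Gamma_pos_of_pos (by linarith)).ne'
  have key2 : Real.Gamma p * Real.Gamma q
      = Real.Gamma (p+q) * ∫ t in Ioo (0:ℝ) 1, t ^ (p-1) * (1-t) ^ (q-1) := by
    exact_mod_cast key
  rw [key2]
  field_simp



lemma geom_partial_le {t : ℝ} (ht0 : 0 ≤ t) (ht1 : t < 1) (N : ℕ) :
    ∑ k ∈ range N, t ^ k ≤ 1 / (1 - t) := by
  have h1t : (0:ℝ) < 1 - t := by linarith
  rw [le_div_iff₀ h1t]
  have := geom_sum_mul t N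
  -- (∑ t^i) * (t - 1) = t^N - 1
  nlinarith [pow_nonneg ht0 N, this]

lemma geom_partial_Ico_le {t : ℝ} (ht0 : 0 ≤ t) (ht1 : t < 1) (j N : ℕ) :
    ∑ k ∈ Finset.Ico j N, t ^ k ≤ t ^ j / (1 - t) := by
  rw [Finset.sum_Ico_eq_sum_range]
  have : ∀ k, t ^ (j + k) = t^j * t^k := fun k => pow_add t j k
  simp_rw [this, ← Finset.mul_sum]
  rw [div_eq_mul_one_div]
  exact mul_le_mul_of_nonneg_left (geom_partial_le ht0 ht1 _) (pow_nonneg ht0 j)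

lemma hockey (n k : ℕ) : ∑ j ∈ range (k+1), ((n+j).choose j : ℝ) = ((n+1+k).choose k : ℝ) := by
  have h : ∑ j ∈ range (k+1), (n+j).choose j = (n+1+k).choose k := by
    have e1 : ∀ j, (n+j).choose j = (n+j).choose n := fun j => by
      rw [← Nat.choose_symm (Nat.le_add_right n j)]
      congr 1
      omega
    simp_rw [e1]
    have e2 : ∑ j ∈ range (k+1), (n+j).choose n = ∑ i ∈ Finset.Ico n (n+k+1), i.choose n := by
      rw [Finset.sum_Ico_eq_sum_range, show n+k+1-n = k+1 from by omega]
    rw [e2, Finset.Ico_add_one_right_eq_Icc, Nat.sum_Icc_choose]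
    rw [show n+1+k = n+k+1 from by omega, ← Nat.choose_symm (show k ≤ n+k+1 by omega),
      show n+k+1-k = n+1 from by omega]
  exact_mod_cast h

/-- Partial sums of the negative binomial series. -/
lemma binom_partial_le (n : ℕ) : ∀ (N : ℕ) {t : ℝ}, 0 ≤ t → t < 1 →
    ∑ k ∈ range N, ((n+k).choose k : ℝ) * t ^ k ≤ 1 / (1-t) ^ (n+1) := by
  induction n with
  | zero =>
    intro N t ht0 ht1
    simpa using geom_partial_le ht0 ht1 N
  | succ n ih =>
    intro N t ht0 ht1
    have h1t : (0:ℝ) < 1 - t := by linarith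
    -- rewrite coefficient by hockey stick
    have e1 : ∀ k, ((n+1+k).choose k : ℝ) * t^k
        = ∑ j ∈ range (k+1), ((n+j).choose j : ℝ) * t^k := by
      intro k
      rw [← Finset.sum_mul, hockey]
    calc ∑ k ∈ range N, ((n+1+k).choose k : ℝ) * t ^ k
        = ∑ k ∈ range N, ∑ j ∈ range (k+1), ((n+j).choose j : ℝ) * t^k := by
          exact Finset.sum_congr rfl fun k _ => e1 k
      _ = ∑ k ∈ range N, ∑ j ∈ range N, if j ≤ k then ((n+j).choose j : ℝ) * t^k else 0 := by
          apply Finset.sum_congr rfl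
          intro k hk
          rw [← Finset.sum_filter]
          congr 1
          ext j
          simp only [Finset.mem_filter, Finset.mem_range, Nat.lt_succ_iff]
          simp only [Finset.mem_range] at hk
          omega
      _ = ∑ j ∈ range N, ∑ k ∈ range N, if j ≤ k then ((n+j).choose j : ℝ) * t^k else 0 :=
          Finset.sum_comm
      _ = ∑ j ∈ range N, ((n+j).choose j : ℝ) * ∑ k ∈ Finset.Ico j N, t^k := by
          apply Finset.sum_congr rfl
          intro j _
          rw [← Finset.sum_filter, Finset.mul_sum]
          congr 1
          ext k
          simp [Finset.mem_filter, Finset.mem_Ico, Finset.mem_range]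
          omega
      _ ≤ ∑ j ∈ range N, ((n+j).choose j : ℝ) * (t^j / (1-t)) := by
          apply Finset.sum_le_sum
          intro j hj
          exact mul_le_mul_of_nonneg_left (geom_partial_Ico_le ht0 ht1 j N)
            (by positivity)
      _ = (∑ j ∈ range N, ((n+j).choose j : ℝ) * t^j) / (1-t) := by
          rw [Finset.sum_div]
          congr 1
          ext j
          ring
      _ ≤ (1 / (1-t)^(n+1)) / (1-t) := by
          gcongr
          exact ih N ht0 ht1

      _ = 1 / (1-t)^(n+2) := by
          rw [div_div, ← pow_succ]


lemma sum_le_T (l : ℝ) (hl : 0 < l) (n : ℕ) (hn : 1 ≤ n) (β : ℝ) (hβ : 0 < β) (s : Finset ℕ) :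
    ∑ k ∈ s, Real.Gamma ((n:ℝ)+k) * Real.Gamma (β+k)
        / ((k.factorial:ℝ) * Real.Gamma ((((n:ℝ)+β+l+1/2))+k))
      ≤ Real.Gamma n * Real.Gamma β * Real.Gamma (l+1/2)
        / (Real.Gamma ((n:ℝ)+l+1/2) * Real.Gamma (β+l+1/2)) := by
  obtain ⟨n', rfl⟩ : ∃ n', n = n' + 1 := ⟨n - 1, by omega⟩
  set γ : ℝ := ((n'+1:ℕ):ℝ) + l + 1/2 with hγdef
  have hγ : 0 < γ := by rw [hγdef]; positivity
  have hγG := Real.Gamma_pos_of_pos hγ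
  -- coefficients
  set a : ℕ → ℝ := fun k => Real.Gamma (((n'+1:ℕ):ℝ)+k) / (k.factorial : ℝ) with ha
  set F : ℕ → ℝ → ℝ := fun k t => t ^ ((β+k)-1) * (1-t) ^ (γ-1) with hF
  have hBk : ∀ k : ℕ, (∫ t in Ioo (0:ℝ) 1, F k t)
      = Real.Gamma (β+k) * Real.Gamma γ / Real.Gamma ((((n'+1:ℕ):ℝ)+β+l+1/2)+k) := by
    intro k
    rw [hF]
    have := betaIntegral_real (p := β+k) (q := γ) (by positivity) hγ
    rw [this]
    congr 2
    rw [hγdef]; ring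
  have hterm : ∀ k ∈ s, Real.Gamma (((n'+1:ℕ):ℝ)+k) * Real.Gamma (β+k)
      / ((k.factorial:ℝ) * Real.Gamma (((((n'+1:ℕ):ℝ)+β+l+1/2))+k))
      = a k * (∫ t in Ioo (0:ℝ) 1, F k t) / Real.Gamma γ := by
    intro k _
    rw [hBk k, ha]
    have h1 : Real.Gamma ((((n'+1:ℕ):ℝ)+β+l+1/2)+k) ≠ 0 := by
      apply (Real.Gamma_pos_of_pos _).ne'
      positivity
    have h2 : (k.factorial : ℝ) ≠ 0 := by exact_mod_cast k.factorial_ne_zero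
    field_simp
  rw [Finset.sum_congr rfl hterm]
  -- sum of integrals = integral of sum
  have hint : ∀ k ∈ s, Integrable (fun t => a k * F k t)
      ((volume : Measure ℝ).restrict (Ioo (0:ℝ) 1)) := by
    intro k _
    exact (betaIntegrable (by positivity : (0:ℝ) < β + k) hγ).const_mul _
  set G : ℝ → ℝ := fun t => (n'.factorial : ℝ) * (t ^ (β-1) * (1-t) ^ ((l+1/2)-1)) with hG
  have hGint : Integrable G ((volume : Measure ℝ).restrict (Ioo (0:ℝ) 1)) :=
    (betaIntegrable hβ (by linarith : (0:ℝ) < l + 1/2)).const_mul _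
  have hpt : ∀ t ∈ Ioo (0:ℝ) 1, ∑ k ∈ s, a k * F k t ≤ G t := by
    intro t ht
    obtain ⟨ht0, ht1⟩ := ht
    have h1t : (0:ℝ) < 1 - t := by linarith
    have hak : ∀ k : ℕ, a k = ((n'+k).choose k : ℝ) * (n'.factorial : ℝ) := by
      intro k
      simp only [ha]
      have e1 : ((n'+1:ℕ):ℝ) + (k:ℝ) = ((n'+k:ℕ):ℝ) + 1 := by push_cast; ring
      rw [e1, Real.Gamma_nat_eq_factorial]
      have e2 := Nat.choose_mul_factorial_mul_factorial (Nat.le_add_left k n')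
      have e3 : n' + k - k = n' := by omega
      rw [e3] at e2
      have e2' : (((n'+k).factorial : ℕ) : ℝ)
          = ((n'+k).choose k : ℝ) * (k.factorial : ℝ) * (n'.factorial : ℝ) := by
        exact_mod_cast e2.symm
      rw [e2']
      field_simp
    have hFt : ∀ k : ℕ, F k t = (t ^ (β-1) * (1-t) ^ (γ-1)) * t^k := by
      intro k
      simp only [hF]
      rw [show (β+(k:ℝ))-1 = (β-1) + (k:ℝ) by ring, Real.rpow_add ht0, Real.rpow_natCast]
      ring
    have hsum : ∑ k ∈ s, a k * F k t
        = (t ^ (β-1) * (1-t) ^ (γ-1)) * (n'.factorial : ℝ)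
          * ∑ k ∈ s, ((n'+k).choose k : ℝ) * t^k := by
      rw [Finset.mul_sum]
      apply Finset.sum_congr rfl
      intro k _
      rw [hak k, hFt k]
      ring
    rw [hsum]
    obtain ⟨N, hsN⟩ := s.exists_nat_subset_range
    have hb : ∑ k ∈ s, ((n'+k).choose k : ℝ) * t^k ≤ 1 / (1-t)^(n'+1) := by
      refine le_trans (Finset.sum_le_sum_of_subset_of_nonneg hsN fun k _ _ => by positivity) ?_
      exact binom_partial_le n' N ht0.le ht1
    have hsplit : (1-t) ^ (γ-1) = (1-t) ^ ((l+1/2)-1) * (1-t)^(n'+1) := by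
      rw [← Real.rpow_natCast (1-t) (n'+1), ← Real.rpow_add h1t]
      congr 1
      rw [hγdef]
      push_cast
      ring
    rw [hG, hsplit]
    have hc : (0:ℝ) ≤ t ^ (β-1) * ((1-t) ^ ((l+1/2)-1) * (1-t)^(n'+1)) * (n'.factorial : ℝ) := by
      positivity
    calc t ^ (β-1) * ((1-t) ^ ((l+1/2)-1) * (1-t)^(n'+1)) * (n'.factorial : ℝ)
          * ∑ k ∈ s, ((n'+k).choose k : ℝ) * t^k
        ≤ t ^ (β-1) * ((1-t) ^ ((l+1/2)-1) * (1-t)^(n'+1)) * (n'.factorial : ℝ)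
          * (1 / (1-t)^(n'+1)) := by
          exact mul_le_mul_of_nonneg_left hb hc
      _ = (n'.factorial : ℝ) * (t ^ (β-1) * (1-t) ^ ((l+1/2)-1)) := by
          field_simp
  -- assemble
  have hGval : ∫ t in Ioo (0:ℝ) 1, G t
      = (n'.factorial : ℝ) * (Real.Gamma β * Real.Gamma (l+1/2) / Real.Gamma (β+l+1/2)) := by
    rw [hG, MeasureTheory.integral_const_mul, betaIntegral_real hβ (by linarith : (0:ℝ) < l+1/2)]
    congr 2
    · congr 1
      ring
  calc ∑ k ∈ s, a k * (∫ t in Ioo (0:ℝ) 1, F k t) / Real.Gamma γ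
      = (∑ k ∈ s, ∫ t in Ioo (0:ℝ) 1, a k * F k t) / Real.Gamma γ := by
        rw [← Finset.sum_div]
        congr 1
        exact Finset.sum_congr rfl fun k _ => (MeasureTheory.integral_const_mul (a k) _).symm
    _ = (∫ t in Ioo (0:ℝ) 1, ∑ k ∈ s, a k * F k t) / Real.Gamma γ := by
        rw [MeasureTheory.integral_finset_sum s hint]
    _ ≤ (∫ t in Ioo (0:ℝ) 1, G t) / Real.Gamma γ := by
        gcongr ?_ / _
        exact MeasureTheory.setIntegral_mono_on
          (MeasureTheory.integrable_finset_sum s hint) hGint measurableSet_Ioo hpt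
    _ = Real.Gamma (n'+1:ℕ) * Real.Gamma β * Real.Gamma (l+1/2)
        / (Real.Gamma (((n'+1:ℕ):ℝ)+l+1/2) * Real.Gamma (β+l+1/2)) := by
        rw [hGval]
        have : Real.Gamma ((n'+1:ℕ):ℝ) = (n'.factorial : ℝ) := by
          rw [show ((n'+1:ℕ):ℝ) = (n':ℝ)+1 by push_cast; ring, Real.Gamma_nat_eq_factorial]
        rw [← hγdef, this]
        field_simp


lemma Gamma_ascPochhammer (x : ℝ) (hx : 0 < x) (m : ℕ) :
    Real.Gamma x * (ascPochhammer ℝ m).eval x = Real.Gamma (x + m) := by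
  induction m with
  | zero => simp
  | succ m ih =>
    rw [ascPochhammer_succ_right, Polynomial.eval_mul]
    have harg : x + ((m+1:ℕ):ℝ) = (x + m) + 1 := by push_cast; ring
    have hpos : (0:ℝ) < x + m := by positivity
    rw [harg, Real.Gamma_add_one hpos.ne', ← ih]
    simp [Polynomial.eval_add]
    ring

lemma wUltra_bound (l : ℝ) (hl : 0 < l) : ∃ C : ℝ, 0 < C ∧ ∀ m : ℕ, 1 ≤ m →
    Real.sqrt (wUltra l m) ≤ C * ((m:ℝ) + 1) ^ l := by
  obtain ⟨C, hC, hCb⟩ := Gamma_ratio_le (2*l) (by linarith)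
  set c2 : ℝ := Real.Gamma l * C * (1+l) / (Real.sqrt π * Real.Gamma (l + 1/2) * Real.Gamma (2*l))
    with hc2
  have hπ : (0:ℝ) < Real.sqrt π := Real.sqrt_pos.2 Real.pi_pos
  have hG1 : (0:ℝ) < Real.Gamma l := Real.Gamma_pos_of_pos hl
  have hG2 : (0:ℝ) < Real.Gamma (l + 1/2) := Real.Gamma_pos_of_pos (by linarith)
  have hG3 : (0:ℝ) < Real.Gamma (2*l) := Real.Gamma_pos_of_pos (by linarith)
  have hc2pos : 0 < c2 := by rw [hc2]; positivity
  refine ⟨Real.sqrt c2, Real.sqrt_pos.2 hc2pos, fun m hm => ?_⟩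
  have hm1 : (1:ℝ) ≤ (m:ℝ) := by exact_mod_cast hm
  have hm0 : (0:ℝ) < m := by linarith
  -- w ≤ c2 * (m+1)^(2l)
  have hw : wUltra l m ≤ c2 * ((m:ℝ)+1) ^ (2*l) := by
    have hP : (ascPochhammer ℝ m).eval (2*l) = Real.Gamma (2*l + m) / Real.Gamma (2*l) := by
      rw [← Gamma_ascPochhammer (2*l) (by linarith) m]
      field_simp
    have hfac : (m.factorial : ℝ) = (m:ℝ) * Real.Gamma m := by
      rw [← Real.Gamma_nat_eq_factorial, Real.Gamma_add_one hm0.ne']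
    have hGr := hCb (m:ℝ) hm1
    have hGm : (0:ℝ) < Real.Gamma m := Real.Gamma_pos_of_pos hm0
    have hml : (m:ℝ) + l ≤ (1+l) * m := by nlinarith
    have hpow : (m:ℝ) ^ (2*l) ≤ ((m:ℝ)+1) ^ (2*l) :=
      Real.rpow_le_rpow hm0.le (by linarith) (by linarith)
    have harg : (2*l + (m:ℝ)) = (m:ℝ) + 2*l := by ring
    rw [wUltra, hP, hfac]
    rw [div_le_iff₀ (by positivity)]
    have hnum : Real.Gamma l * (Real.Gamma (2*l + m) / Real.Gamma (2*l)) * ((m:ℝ) + l)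
        ≤ Real.Gamma l * ((C * Real.Gamma m * (m:ℝ) ^ (2*l)) / Real.Gamma (2*l)) * ((1+l) * m) := by
      apply mul_le_mul
      · apply mul_le_mul_of_nonneg_left _ hG1.le
        apply (div_le_div_iff_of_pos_right hG3).2
        · rw [harg]; exact hGr
      · exact hml
      · positivity
      · positivity
    refine hnum.trans ?_
    rw [hc2]
    have e1 : Real.Gamma l * (C * Real.Gamma ↑m * ↑m ^ (2 * l) / Real.Gamma (2 * l)) * ((1 + l) * ↑m)
        = (Real.Gamma l * C * (1 + l) / (√π * Real.Gamma (l + 1 / 2) * Real.Gamma (2 * l)))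
          * (↑m : ℝ) ^ (2 * l) * (√π * Real.Gamma (l + 1 / 2) * (↑m * Real.Gamma ↑m)) := by
      field_simp
    rw [e1]
    apply mul_le_mul_of_nonneg_right _ (by positivity)
    apply mul_le_mul_of_nonneg_left hpow (by positivity)
  -- conclude with sqrt
  have h2 : Real.sqrt (wUltra l m) ≤ Real.sqrt (c2 * ((m:ℝ)+1) ^ (2*l)) := Real.sqrt_le_sqrt hw
  refine h2.trans ?_
  rw [Real.sqrt_mul hc2pos.le]
  apply mul_le_mul_of_nonneg_left _ (Real.sqrt_nonneg _)
  have e2 : ((m:ℝ)+1) ^ (2*l) = (((m:ℝ)+1) ^ l) ^ 2 := by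
    rw [sq, ← Real.rpow_add (by positivity)]
    norm_num
    ring_nf
  rw [e2, Real.sqrt_sq (by positivity)]


lemma ofReal_tsum_le {h : ℕ → ℝ} (hh : ∀ k, 0 ≤ h k) :
    ENNReal.ofReal (∑' k, h k) ≤ ∑' k, ENNReal.ofReal (h k) := by
  by_cases hs : Summable h
  · exact le_of_eq (ENNReal.ofReal_tsum_of_nonneg hh hs)
  · rw [tsum_eq_zero_of_not_summable hs]
    simp

/-- duplication-formula step -/
lemma half_pow_Gamma (x : ℝ) (hx : 0 < x) :
    (1/2:ℝ) ^ (2*x) * Real.Gamma (2*x)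
      = Real.Gamma x * Real.Gamma (x + 1/2) / (2 * Real.sqrt π) := by
  have hdup := Real.Gamma_mul_Gamma_add_half x
  have h2 : (0:ℝ) < 2 := two_pos
  have hπ : (0:ℝ) < Real.sqrt π := Real.sqrt_pos.2 Real.pi_pos
  have hhalf : (1/2:ℝ) ^ (2*x) = ((2:ℝ) ^ (2*x))⁻¹ := by
    rw [one_div, Real.inv_rpow (by norm_num : (0:ℝ) ≤ 2)]
  have hsplit : (2:ℝ) ^ (1 - 2*x) = 2 * ((2:ℝ) ^ (2*x))⁻¹ := by
    rw [show (1 - 2*x) = 1 + (-(2*x)) by ring, Real.rpow_add h2, Real.rpow_one,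
      Real.rpow_neg h2.le]
  rw [hsplit] at hdup
  have hpow : (0:ℝ) < (2:ℝ) ^ (2*x) := Real.rpow_pos_of_pos h2 _
  rw [hhalf]
  field_simp at hdup ⊢
  nlinarith [hdup]

theorem integral_le_T (l : ℝ) (hl : 0 < l) (m : ℕ) (hm : 1 ≤ m) :
    (∫ u in Set.Ioi (0:ℝ), Real.exp (-2 * u) * u ^ (-l - 1) * besselI (l + m) (2 * u))
      ≤ Real.Gamma (l+1/2) / (2 * Real.sqrt π)
        * (Real.Gamma ((m:ℝ)/2) * Real.Gamma (((m:ℝ)+1)/2)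
          / (Real.Gamma ((m:ℝ)/2 + (l+1/2)) * Real.Gamma (((m:ℝ)+1)/2 + (l+1/2)))) := by
  have hm1 : (1:ℝ) ≤ (m:ℝ) := by exact_mod_cast hm
  have hπ : (0:ℝ) < Real.sqrt π := Real.sqrt_pos.2 Real.pi_pos
  set T : ℝ := Real.Gamma (l+1/2) / (2 * Real.sqrt π)
        * (Real.Gamma ((m:ℝ)/2) * Real.Gamma (((m:ℝ)+1)/2)
          / (Real.Gamma ((m:ℝ)/2 + (l+1/2)) * Real.Gamma (((m:ℝ)+1)/2 + (l+1/2)))) with hT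
  have hTpos : 0 < T := by
    rw [hT]
    have h1 := Real.Gamma_pos_of_pos (show (0:ℝ) < l + 1/2 by linarith)
    have h2 := Real.Gamma_pos_of_pos (show (0:ℝ) < (m:ℝ)/2 by linarith)
    have h3 := Real.Gamma_pos_of_pos (show (0:ℝ) < ((m:ℝ)+1)/2 by linarith)
    have h4 := Real.Gamma_pos_of_pos (show (0:ℝ) < (m:ℝ)/2 + (l+1/2) by linarith)
    have h5 := Real.Gamma_pos_of_pos (show (0:ℝ) < ((m:ℝ)+1)/2 + (l+1/2) by linarith)
    positivity
  set D : ℕ → ℝ := fun k => (k.factorial : ℝ) * Real.Gamma (l + (m:ℝ) + (k:ℝ) + 1) with hD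
  have hDpos : ∀ k, 0 < D k := by
    intro k
    rw [hD]
    have h1 : (0:ℝ) < (k.factorial : ℝ) := by exact_mod_cast k.factorial_pos
    have h2 := Real.Gamma_pos_of_pos (show (0:ℝ) < l + (m:ℝ) + (k:ℝ) + 1 by
      have := Nat.cast_nonneg (α := ℝ) k; linarith)
    positivity
  set g : ℕ → ℝ → ℝ := fun k u => Real.exp (-2*u) * u ^ ((m:ℝ) + 2*(k:ℝ) - 1) / D k with hg
  set t' : ℕ → ℝ := fun k => (1/2:ℝ) ^ ((m:ℝ)+2*(k:ℝ)) * Real.Gamma ((m:ℝ)+2*(k:ℝ)) / D k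
    with ht'
  have ht'pos : ∀ k, 0 ≤ t' k := by
    intro k
    rw [ht']
    have h1 := Real.Gamma_pos_of_pos (show (0:ℝ) < (m:ℝ)+2*(k:ℝ) by
      have := Nat.cast_nonneg (α := ℝ) k; linarith)
    have := hDpos k
    positivity
  -- pointwise expansion
  have h_f_eq : ∀ u : ℝ, u ∈ Set.Ioi (0:ℝ) →
      Real.exp (-2 * u) * u ^ (-l - 1) * besselI (l + m) (2 * u) = ∑' k, g k u := by
    intro u hu
    rw [Set.mem_Ioi] at hu
    rw [besselI, ← tsum_mul_left]
    apply tsum_congr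
    intro k
    simp only [hg, hD]
    have h2u : (2*u)/2 = u := by ring
    rw [h2u]
    have hrw : u ^ (-l-1) * u ^ ((l + (m:ℝ)) + 2*(k:ℝ)) = u ^ ((m:ℝ) + 2*(k:ℝ) - 1) := by
      rw [← Real.rpow_add hu]
      congr 1
      ring
    rw [← hrw]
    ring
  -- integrability of each term
  have h_int : ∀ k : ℕ, IntegrableOn (g k) (Set.Ioi (0:ℝ)) := by
    intro k
    have hs : (-1:ℝ) < (m:ℝ) + 2*(k:ℝ) - 1 := by
      have := Nat.cast_nonneg (α := ℝ) k; linarith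
    have hbase := integrableOn_rpow_mul_exp_neg_mul_rpow hs (p := 1) one_pos two_pos
    have : IntegrableOn (fun u : ℝ => (u ^ ((m:ℝ) + 2*(k:ℝ) - 1) * Real.exp (-2 * u)) * (D k)⁻¹)
        (Set.Ioi (0:ℝ)) := by
      apply Integrable.mul_const
      apply hbase.congr_fun _ measurableSet_Ioi
      intro u _
      simp only [Real.rpow_one]
    apply this.congr_fun _ measurableSet_Ioi
    intro u _
    simp only [hg]
    rw [div_eq_mul_inv]
    ring
  -- value of each term integral
  have h_val : ∀ k : ℕ, (∫ u in Set.Ioi (0:ℝ), g k u) = t' k := by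
    intro k
    have ha : (0:ℝ) < (m:ℝ) + 2*(k:ℝ) := by
      have := Nat.cast_nonneg (α := ℝ) k; linarith
    have hbase := integral_rpow_mul_exp_neg_mul_Ioi ha two_pos
    simp only [hg, ht']
    rw [show (fun u : ℝ => Real.exp (-2*u) * u ^ ((m:ℝ) + 2*(k:ℝ) - 1) / D k)
        = (fun u : ℝ => (u ^ (((m:ℝ) + 2*(k:ℝ)) - 1) * Real.exp (-(2*u))) * (D k)⁻¹) from
      funext fun u => by rw [div_eq_mul_inv]; ring_nf]
    rw [MeasureTheory.integral_mul_const, hbase]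
    rw [div_eq_mul_inv]
    ring_nf
  -- finite sums of t' are bounded by T
  have h_sum : ∀ s : Finset ℕ, ∑ k ∈ s, t' k ≤ T := by
    intro s
    -- rewrite t' k via the duplication formula
    have ht'k : ∀ k : ℕ, t' k
        = Real.Gamma ((m:ℝ)/2 + k) * Real.Gamma (((m:ℝ)+1)/2 + k) / (2 * Real.sqrt π * D k) := by
      intro k
      have hx : (0:ℝ) < (m:ℝ)/2 + k := by
        have := Nat.cast_nonneg (α := ℝ) k; linarith
      have := half_pow_Gamma ((m:ℝ)/2 + k) hx
      rw [show 2*((m:ℝ)/2 + (k:ℝ)) = (m:ℝ) + 2*(k:ℝ) by ring] at this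
      simp only [ht']
      rw [this]
      rw [show (m:ℝ)/2 + (k:ℝ) + 1/2 = ((m:ℝ)+1)/2 + (k:ℝ) by ring]
      rw [div_div]
    rcases Nat.even_or_odd m with hpar | hpar
    · -- m = 2n, n ≥ 1
      obtain ⟨n, hn2⟩ := hpar
      have hn : 1 ≤ n := by omega
      have hmc : (m:ℝ) = 2*(n:ℝ) := by rw [hn2]; push_cast; ring
      set β : ℝ := (n:ℝ) + 1/2 with hβdef
      have hβ : 0 < β := by rw [hβdef]; positivity
      have key := sum_le_T l hl n hn β hβ s
      have e1 : ∀ k : ℕ, t' k = Real.Gamma ((n:ℝ)+k) * Real.Gamma (β+k)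
          / ((k.factorial:ℝ) * Real.Gamma ((((n:ℝ)+β+l+1/2))+k)) / (2 * Real.sqrt π) := by
        intro k
        rw [ht'k k]
        simp only [hD]
        rw [hmc]
        rw [show (2*(n:ℝ))/2 + (k:ℝ) = (n:ℝ) + k by ring,
          show ((2*(n:ℝ))+1)/2 + (k:ℝ) = β + k by rw [hβdef]; ring,
          show l + 2*(n:ℝ) + (k:ℝ) + 1 = (((n:ℝ)+β+l+1/2))+k by rw [hβdef]; ring]
        field_simp
      rw [Finset.sum_congr rfl (fun k _ => e1 k), ← Finset.sum_div]
      have hfin : Real.Gamma (n:ℝ) * Real.Gamma β * Real.Gamma (l+1/2)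
          / (Real.Gamma ((n:ℝ)+l+1/2) * Real.Gamma (β+l+1/2)) / (2 * Real.sqrt π) = T := by
        rw [hT, hmc]
        rw [show (2*(n:ℝ))/2 = (n:ℝ) by ring, show ((2*(n:ℝ))+1)/2 = β by rw [hβdef]; ring,
          show (n:ℝ) + (l+1/2) = (n:ℝ)+l+1/2 by ring]
        field_simp
        ring
      rw [← hfin]
      exact div_le_div_of_nonneg_right key (by positivity)
    · -- m = 2j+1
      obtain ⟨j, hn2⟩ := hpar
      set n : ℕ := j + 1 with hndef
      have hn : 1 ≤ n := by omega
      have hmc : (m:ℝ) = 2*(j:ℝ) + 1 := by rw [hn2]; push_cast; ring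
      set β : ℝ := (j:ℝ) + 1/2 with hβdef
      have hβ : 0 < β := by rw [hβdef]; positivity
      have key := sum_le_T l hl n hn β hβ s
      have e1 : ∀ k : ℕ, t' k = Real.Gamma ((n:ℝ)+k) * Real.Gamma (β+k)
          / ((k.factorial:ℝ) * Real.Gamma ((((n:ℝ)+β+l+1/2))+k)) / (2 * Real.sqrt π) := by
        intro k
        rw [ht'k k]
        simp only [hD]
        rw [hmc]
        rw [show (2*(j:ℝ)+1)/2 + (k:ℝ) = β + k by rw [hβdef]; ring,
          show ((2*(j:ℝ)+1)+1)/2 + (k:ℝ) = (n:ℝ) + k by rw [hndef]; push_cast; ring,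
          show l + (2*(j:ℝ)+1) + (k:ℝ) + 1 = (((n:ℝ)+β+l+1/2))+k by
            rw [hβdef, hndef]; push_cast; ring]
        field_simp
      rw [Finset.sum_congr rfl (fun k _ => e1 k), ← Finset.sum_div]
      have hfin : Real.Gamma (n:ℝ) * Real.Gamma β * Real.Gamma (l+1/2)
          / (Real.Gamma ((n:ℝ)+l+1/2) * Real.Gamma (β+l+1/2)) / (2 * Real.sqrt π) = T := by
        rw [hT, hmc]
        rw [show (2*(j:ℝ)+1)/2 = β by rw [hβdef]; ring,
          show ((2*(j:ℝ)+1)+1)/2 = (n:ℝ) by rw [hndef]; push_cast; ring,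
          show (n:ℝ) + (l+1/2) = (n:ℝ)+l+1/2 by ring]
        field_simp
        ring
      rw [← hfin]
      exact div_le_div_of_nonneg_right key (by positivity)
  -- final assembly
  set f : ℝ → ℝ := fun u => Real.exp (-2 * u) * u ^ (-l - 1) * besselI (l + m) (2 * u) with hf
  have hgmeas : ∀ k : ℕ, Measurable fun u => ENNReal.ofReal (g k u) := by
    intro k
    apply Measurable.ennreal_ofReal
    simp only [hg]
    fun_prop
  have hgnn : ∀ k : ℕ, ∀ u : ℝ, 0 < u → 0 ≤ g k u := by
    intro k u hu
    simp only [hg]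
    exact div_nonneg (mul_nonneg (Real.exp_pos _).le (Real.rpow_nonneg hu.le _)) (hDpos k).le
  by_cases hInt : Integrable f ((volume : Measure ℝ).restrict (Set.Ioi 0))
  case neg =>
    rw [MeasureTheory.integral_undef hInt]
    exact hTpos.le
  case pos =>
  have h_nonneg : 0 ≤ᵐ[(volume : Measure ℝ).restrict (Set.Ioi 0)] f := by
    filter_upwards [MeasureTheory.ae_restrict_mem measurableSet_Ioi] with u hu
    have hu0 : (0:ℝ) < u := hu
    simp only [hf]
    have hb : 0 ≤ besselI (l + m) (2 * u) := by
      rw [besselI]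
      apply tsum_nonneg
      intro k
      apply div_nonneg
      · apply Real.rpow_nonneg; linarith
      · have h1 : (0:ℝ) < (k.factorial : ℝ) := by exact_mod_cast k.factorial_pos
        have h2 := Real.Gamma_pos_of_pos (show (0:ℝ) < l + (m:ℝ) + (k:ℝ) + 1 by
          have := Nat.cast_nonneg (α := ℝ) k; linarith)
        positivity
    have := Real.rpow_nonneg hu0.le (-l-1)
    have := (Real.exp_pos (-2*u)).le
    positivity
  rw [MeasureTheory.integral_eq_lintegral_of_nonneg_ae h_nonneg hInt.1]
  have hchain : (∫⁻ u in Set.Ioi (0:ℝ), ENNReal.ofReal (f u)) ≤ ENNReal.ofReal T := by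
    calc (∫⁻ u in Set.Ioi (0:ℝ), ENNReal.ofReal (f u))
        ≤ ∫⁻ u in Set.Ioi (0:ℝ), ∑' k, ENNReal.ofReal (g k u) := by
          apply MeasureTheory.lintegral_mono_ae
          filter_upwards [MeasureTheory.ae_restrict_mem measurableSet_Ioi] with u hu
          have hu0 : (0:ℝ) < u := hu
          rw [show f u = ∑' k, g k u from h_f_eq u hu]
          exact ofReal_tsum_le (fun k => hgnn k u hu0)
      _ = ∑' k, ∫⁻ u in Set.Ioi (0:ℝ), ENNReal.ofReal (g k u) :=
          MeasureTheory.lintegral_tsum (fun k => (hgmeas k).aemeasurable)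
      _ ≤ ENNReal.ofReal T := by
          rw [ENNReal.tsum_eq_iSup_sum]
          apply iSup_le
          intro s
          have hval : ∀ k ∈ s, (∫⁻ u in Set.Ioi (0:ℝ), ENNReal.ofReal (g k u))
              = ENNReal.ofReal (t' k) := by
            intro k _
            rw [← MeasureTheory.ofReal_integral_eq_lintegral_ofReal (h_int k) ?_, h_val k]
            · filter_upwards [MeasureTheory.ae_restrict_mem measurableSet_Ioi] with u hu
              exact hgnn k u hu
          rw [Finset.sum_congr rfl hval, ← ENNReal.ofReal_sum_of_nonneg (fun k _ => ht'pos k)]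
          exact ENNReal.ofReal_le_ofReal (h_sum s)
  calc (∫⁻ u in Set.Ioi (0:ℝ), ENNReal.ofReal (f u)).toReal
      ≤ (ENNReal.ofReal T).toReal := ENNReal.toReal_mono ENNReal.ofReal_ne_top hchain
    _ = T := ENNReal.toReal_ofReal hTpos.le

end PKB

set_option maxHeartbeats 1000000 in
theorem poisson_kernel_bound (l : ℝ) (hl : 0 < l) :
    ∃ C : ℝ, 0 < C ∧ ∀ m : ℕ, 1 ≤ m →
      Real.sqrt (wUltra l m) *
          ∫ u in Set.Ioi (0 : ℝ), Real.exp (-2 * u) * u ^ (-l - 1) * besselI (l + m) (2 * u)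
        ≤ C / ((m : ℝ) + 1) ^ (l + 1) := by
  obtain ⟨C₁, hC₁, hwb⟩ := PKB.wUltra_bound l hl
  have hπ : (0:ℝ) < Real.sqrt π := Real.sqrt_pos.2 Real.pi_pos
  set a : ℝ := l + 1/2 with ha
  have ha0 : (0:ℝ) ≤ a := by rw [ha]; linarith
  set K : ℝ := 2 * (1 + 2*a) with hK
  have hKpos : (0:ℝ) < K := by rw [hK]; linarith
  set G₀ : ℝ := Real.Gamma (l+1/2) / (2 * Real.sqrt π) with hG₀
  have hG₀pos : 0 < G₀ := by
    rw [hG₀]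
    have := Real.Gamma_pos_of_pos (show (0:ℝ) < l + 1/2 by linarith)
    positivity
  refine ⟨C₁ * G₀ * K^2 * (8:ℝ)^a, by positivity, fun m hm => ?_⟩
  have hm1 : (1:ℝ) ≤ (m:ℝ) := by exact_mod_cast hm
  have hmp : (0:ℝ) < (m:ℝ) + 1 := by linarith
  have hIle := PKB.integral_le_T l hl m hm
  rw [← ha, ← hG₀] at hIle
  set x₁ : ℝ := (m:ℝ)/2 with hx₁def
  set x₂ : ℝ := ((m:ℝ)+1)/2 with hx₂def
  have hx₁ : (0:ℝ) < x₁ := by rw [hx₁def]; linarith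
  have hx₂ : (0:ℝ) < x₂ := by rw [hx₂def]; linarith
  set A : ℝ := Real.Gamma x₁ with hA
  set B : ℝ := Real.Gamma x₂ with hB
  set A' : ℝ := Real.Gamma (x₁ + a) with hA'
  set B' : ℝ := Real.Gamma (x₂ + a) with hB'
  have hApos : 0 < A := Real.Gamma_pos_of_pos hx₁
  have hBpos : 0 < B := Real.Gamma_pos_of_pos hx₂
  have hA'pos : 0 < A' := Real.Gamma_pos_of_pos (by linarith)
  have hB'pos : 0 < B' := Real.Gamma_pos_of_pos (by linarith)
  set T : ℝ := G₀ * (A * B / (A' * B')) with hT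
  have hTpos : 0 < T := by rw [hT]; positivity
  -- step 1
  have step1 : Real.sqrt (wUltra l m) *
      (∫ u in Set.Ioi (0 : ℝ), Real.exp (-2 * u) * u ^ (-l - 1) * besselI (l + m) (2 * u))
      ≤ (C₁ * ((m:ℝ)+1) ^ l) * T := by
    calc Real.sqrt (wUltra l m) *
        (∫ u in Set.Ioi (0 : ℝ), Real.exp (-2 * u) * u ^ (-l - 1) * besselI (l + m) (2 * u))
        ≤ Real.sqrt (wUltra l m) * T :=
          mul_le_mul_of_nonneg_left hIle (Real.sqrt_nonneg _)
      _ ≤ (C₁ * ((m:ℝ)+1) ^ l) * T :=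
          mul_le_mul_of_nonneg_right (hwb m hm) hTpos.le
  refine step1.trans ?_
  -- ratio bounds
  have h₁ := PKB.Gamma_ratio_ge_half a ha0 x₁ (by rw [hx₁def]; linarith)
  have h₂ := PKB.Gamma_ratio_ge_half a ha0 x₂ (by rw [hx₂def]; linarith)
  rw [← hK] at h₁ h₂
  rw [← hA, ← hA'] at h₁
  rw [← hB, ← hB'] at h₂
  -- h₁ : A * x₁^a ≤ K * A',  h₂ : B * x₂^a ≤ K * B'
  have hprod : (A * B) * (x₁ ^ a * x₂ ^ a) ≤ K^2 * (A' * B') := by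
    nlinarith [mul_le_mul h₁ h₂ (by positivity) (by positivity),
      Real.rpow_nonneg hx₁.le a, Real.rpow_nonneg hx₂.le a]
  -- (m+1)^l * (m+1)^(l+1) ≤ 8^a * (x₁^a * x₂^a)
  have hQR : ((m:ℝ)+1) ^ l * ((m:ℝ)+1) ^ (l+1) ≤ (8:ℝ) ^ a * (x₁ ^ a * x₂ ^ a) := by
    have e1 : ((m:ℝ)+1) ^ l * ((m:ℝ)+1) ^ (l+1) = (((m:ℝ)+1) ^ (2:ℝ)) ^ a := by
      rw [← Real.rpow_add hmp, ← Real.rpow_mul hmp.le]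
      congr 1
      rw [ha]; ring
    have e2 : (8:ℝ) ^ a * (x₁ ^ a * x₂ ^ a) = (8 * (x₁ * x₂)) ^ a := by
      rw [← Real.mul_rpow hx₁.le hx₂.le,
        ← Real.mul_rpow (by norm_num) (by positivity)]
    rw [e1, e2]
    apply Real.rpow_le_rpow (by positivity) _ ha0
    rw [hx₁def, hx₂def, Real.rpow_two]
    nlinarith
  clear_value a K G₀ x₁ x₂ A B A' B' T
  -- conclude
  have hgoal : (C₁ * ((m:ℝ)+1) ^ l) * T * ((m:ℝ)+1) ^ (l+1) ≤ C₁ * G₀ * K^2 * (8:ℝ)^a := by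
    rw [hT]
    have hQ : (0:ℝ) ≤ ((m:ℝ)+1) ^ l := by positivity
    have hR : (0:ℝ) ≤ ((m:ℝ)+1) ^ (l+1) := by positivity
    have h8 : (0:ℝ) ≤ (8:ℝ)^a := by positivity
    have key : (A * B / (A' * B')) * (((m:ℝ)+1) ^ l * ((m:ℝ)+1) ^ (l+1))
        ≤ K^2 * (8:ℝ)^a := by
      calc (A * B / (A' * B')) * (((m:ℝ)+1) ^ l * ((m:ℝ)+1) ^ (l+1))
          ≤ (A * B / (A' * B')) * ((8:ℝ)^a * (x₁ ^ a * x₂ ^ a)) :=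
            mul_le_mul_of_nonneg_left hQR (by positivity)
        _ = ((A * B) * (x₁ ^ a * x₂ ^ a)) * (8:ℝ)^a / (A' * B') := by
            field_simp
        _ ≤ (K^2 * (A' * B')) * (8:ℝ)^a / (A' * B') := by
            gcongr
        _ = K^2 * (8:ℝ)^a := by field_simp
    calc (C₁ * ((m:ℝ)+1) ^ l) * (G₀ * (A * B / (A' * B'))) * ((m:ℝ)+1) ^ (l+1)
        = (C₁ * G₀) * ((A * B / (A' * B')) * (((m:ℝ)+1) ^ l * ((m:ℝ)+1) ^ (l+1))) := by ring
      _ ≤ (C₁ * G₀) * (K^2 * (8:ℝ)^a) := by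
          apply mul_le_mul_of_nonneg_left key (by positivity)
      _ = C₁ * G₀ * K^2 * (8:ℝ)^a := by ring
  rw [le_div_iff₀ (by positivity : (0:ℝ) < ((m:ℝ)+1) ^ (l+1))]
  exact hgoal
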